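/- If β > 0 is irrational, then N_β(α) = α²/2 − ((√β + √(1/β))/2)·α + o_β(α) as α → ∞; in particular the limit lim_{α→∞} (N_β(α) − α²/2)/α exists and equals −(√β + √(1/β))/2 < −1. -/

import Mathlib

set_option maxHeartbeats 1000000

open Finset

/-- `N β α` is the number of positive lattice points `(k,m)` with `m ≤ α√β − kβ`. -/
noncomputable def N (β α : ℝ) : ℕ :=
  Set.ncard {p : ℤ × ℤ | 0 < p.1 ∧ 0 < p.2 ∧
    (p.2 : ℝ) ≤ α * Real.sqrt β - (p.1 : ℝ) * β}

/-- pointwise formula for `fract (x + m/q)` -/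
lemma fract_add_div (q : ℕ) (hq : 0 < q) (x : ℝ) (m : ℤ) :
    Int.fract (x + (m : ℝ) / q) =
      Int.fract ((q : ℝ) * x) / q + (((⌊(q : ℝ) * x⌋ + m) % (q : ℤ) : ℤ) : ℝ) / q := by
  have hq0 : (0:ℝ) < (q:ℝ) := by exact_mod_cast hq
  set n : ℤ := ⌊(q : ℝ) * x⌋ with hn
  set v : ℝ := Int.fract ((q : ℝ) * x) with hv
  have hx : x = ((n : ℝ) + v) / q := by
    field_simp
    rw [hv, Int.fract]
    ring
  set s : ℤ := (n + m) / (q : ℤ) with hs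
  set r : ℤ := (n + m) % (q : ℤ) with hr
  have hdm : (q : ℤ) * s + r = n + m := Int.mul_ediv_add_emod _ _
  have h1 : x + (m : ℝ) / q = (v / q + (r : ℝ) / q) + (s : ℤ) := by
    rw [hx]
    have : ((n : ℤ) : ℝ) + (m : ℝ) = (q : ℝ) * (s : ℝ) + (r : ℝ) := by
      exact_mod_cast congrArg (fun z : ℤ => (z : ℝ)) hdm.symm
    field_simp
    nlinarith [this]
  rw [h1, Int.fract_add_intCast]
  have hr0 : (0:ℤ) ≤ r := Int.emod_nonneg _ (by positivity)
  have hrq : r < (q:ℤ) := Int.emod_lt_of_pos _ (by exact_mod_cast hq)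
  have hv0 : 0 ≤ v := Int.fract_nonneg _
  have hv1 : v < 1 := Int.fract_lt_one _
  rw [Int.fract_eq_self.mpr]
  constructor
  · positivity
  · have hr' : (r : ℝ) ≤ (q : ℝ) - 1 := by
      have : r ≤ (q:ℤ) - 1 := by omega
      exact_mod_cast this
    rw [← add_div, div_lt_one hq0]
    linarith

lemma emod_eq_of_modeq {q : ℤ} (hq : 0 < q) {a b : ℤ} (h : a ≡ b [ZMOD q])
    (h0 : 0 ≤ a) (h1 : a < q) : b % q = a := by
  have h' : a % q = b % q := h
  rw [← h', Int.emod_eq_of_lt h0 h1]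

lemma sum_fract_reindex (q : ℕ) (hq : 0 < q) (p u : ℤ) (hu : p * u ≡ 1 [ZMOD (q:ℤ)])
    (x : ℝ) (g : ℝ → ℝ) :
    ∑ j ∈ range q, g (Int.fract (x + ((j : ℤ) * p : ℤ) / (q:ℝ)))
      = ∑ r ∈ range q, g (Int.fract ((q:ℝ) * x) / q + (r : ℝ) / q) := by
  have hqz : (0:ℤ) < (q:ℤ) := by exact_mod_cast hq
  set n : ℤ := ⌊(q : ℝ) * x⌋ with hn
  refine Finset.sum_nbij' (fun j => ((n + (j:ℤ) * p) % (q:ℤ)).toNat)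
    (fun r => (((r:ℤ) - n) * u % (q:ℤ)).toNat) ?_ ?_ ?_ ?_ ?_
  · intro j hj
    simp only [mem_range] at *
    have h1 := Int.emod_lt_of_pos (n + (j:ℤ)*p) hqz
    have h2 := Int.emod_nonneg (n + (j:ℤ)*p) (b := (q:ℤ)) (by positivity)
    omega
  · intro r hr
    simp only [mem_range] at *
    have h1 := Int.emod_lt_of_pos (((r:ℤ) - n) * u) hqz
    have h2 := Int.emod_nonneg (((r:ℤ) - n) * u) (b := (q:ℤ)) (by positivity)
    omega
  · intro j hj
    simp only [mem_range] at hj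
    have hnn : (0:ℤ) ≤ (n + (j:ℤ)*p) % (q:ℤ) :=
      Int.emod_nonneg _ (b := (q:ℤ)) (by positivity)
    have hcast : ((((n + (j:ℤ) * p) % (q:ℤ)).toNat : ℤ)) = (n + (j:ℤ)*p) % (q:ℤ) :=
      Int.toNat_of_nonneg hnn
    have hmod : (n + (j:ℤ)*p) % (q:ℤ) ≡ (n + (j:ℤ)*p) [ZMOD (q:ℤ)] :=
      Int.emod_emod_of_dvd _ dvd_rfl
    have key : ((j:ℤ)) ≡ (((n + (j:ℤ)*p) % (q:ℤ)) - n) * u [ZMOD (q:ℤ)] := by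
      calc ((j:ℤ)) = (j:ℤ) * 1 := (mul_one _).symm
        _ ≡ (j:ℤ) * (p * u) [ZMOD (q:ℤ)] := Int.ModEq.mul_left _ hu.symm
        _ = ((n + (j:ℤ)*p) - n) * u := by ring
        _ ≡ (((n + (j:ℤ)*p) % (q:ℤ)) - n) * u [ZMOD (q:ℤ)] :=
            Int.ModEq.mul_right u (Int.ModEq.sub_right n hmod.symm)
    have hres := emod_eq_of_modeq hqz key (by positivity) (by exact_mod_cast hj)
    simp only [hcast, hres, Int.toNat_natCast]
  · intro r hr
    simp only [mem_range] at hr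
    have hnn : (0:ℤ) ≤ ((r:ℤ) - n) * u % (q:ℤ) :=
      Int.emod_nonneg _ (b := (q:ℤ)) (by positivity)
    have hcast : (((((r:ℤ) - n) * u % (q:ℤ)).toNat : ℤ)) = ((r:ℤ) - n) * u % (q:ℤ) :=
      Int.toNat_of_nonneg hnn
    have hmod : (((r:ℤ)-n)*u) % (q:ℤ) ≡ ((r:ℤ)-n)*u [ZMOD (q:ℤ)] :=
      Int.emod_emod_of_dvd _ dvd_rfl
    have key : ((r:ℤ)) ≡ n + (((r:ℤ) - n) * u % (q:ℤ)) * p [ZMOD (q:ℤ)] := by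
      calc ((r:ℤ)) = n + ((r:ℤ) - n) * 1 := by ring
        _ ≡ n + ((r:ℤ) - n) * (p * u) [ZMOD (q:ℤ)] :=
            Int.ModEq.add_left n (Int.ModEq.mul_left _ hu.symm)
        _ = n + (((r:ℤ) - n) * u) * p := by ring
        _ ≡ n + (((r:ℤ) - n) * u % (q:ℤ)) * p [ZMOD (q:ℤ)] :=
            Int.ModEq.add_left n (Int.ModEq.mul_right p hmod.symm)
    have hres := emod_eq_of_modeq hqz key (by positivity) (by exact_mod_cast hr)
    simp only [hcast, hres, Int.toNat_natCast]
  · intro j hj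
    simp only [mem_range] at hj
    have hnn : (0:ℤ) ≤ (n + (j:ℤ)*p) % (q:ℤ) :=
      Int.emod_nonneg _ (b := (q:ℤ)) (by positivity)
    have hcast : ((((n + (j:ℤ) * p) % (q:ℤ)).toNat : ℤ)) = (n + (j:ℤ)*p) % (q:ℤ) :=
      Int.toNat_of_nonneg hnn
    have hpt := fract_add_div q hq x ((j:ℤ) * p)
    rw [hpt]
    congr 1
    rw [← hn]
    have hc2 : ((((n + (j:ℤ) * p) % (q:ℤ)).toNat : ℕ) : ℝ) = (((n + (j:ℤ)*p) % (q:ℤ) : ℤ) : ℝ) := by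
      exact_mod_cast congrArg (fun z : ℤ => (z : ℝ)) hcast
    rw [hc2]

lemma sum_range_cast (q : ℕ) : (∑ r ∈ range q, (r:ℝ)) = (q:ℝ) * ((q:ℝ) - 1) / 2 := by
  induction q with
  | zero => simp
  | succ n ih => rw [Finset.sum_range_succ, ih]; push_cast; ring

lemma floor_perturb (a ε c : ℝ) (hε : |ε| < c) (hc : c ≤ 1) :
    |⌊a + ε⌋ - ⌊a⌋| ≤ 1 ∧
    (⌊a + ε⌋ - ⌊a⌋ ≠ 0 → Int.fract a < c ∨ 1 - c < Int.fract a) := by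
  have habs := abs_lt.mp hε
  have h1 : ⌊a + ε⌋ ≤ ⌊a⌋ + 1 := by
    have := Int.floor_le_floor (R := ℝ) (show a + ε ≤ a + 1 by linarith)
    simpa using this
  have h2 : ⌊a⌋ - 1 ≤ ⌊a + ε⌋ := by
    have := Int.floor_le_floor (R := ℝ) (show a - 1 ≤ a + ε by linarith)
    simpa using this
  refine ⟨abs_le.mpr ⟨by omega, by omega⟩, fun hne => ?_⟩
  have hcase : ⌊a + ε⌋ = ⌊a⌋ + 1 ∨ ⌊a + ε⌋ = ⌊a⌋ - 1 := by omega
  rcases hcase with hc1 | hc1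
  · right
    have h3 : ((⌊a⌋ : ℝ) + 1) ≤ a + ε := by
      have := Int.floor_le (a + ε)
      rw [hc1] at this
      push_cast at this
      linarith
    rw [Int.fract]
    linarith
  · left
    have h3 : a + ε < (⌊a⌋ : ℝ) := by
      have := Int.lt_floor_add_one (a + ε)
      rw [hc1] at this
      push_cast at this
      linarith
    rw [Int.fract]
    linarith

lemma indicator_sum (q : ℕ) (hq : 0 < q) (v : ℝ) (hv0 : 0 ≤ v) (hv1 : v < 1/q) :
    ∑ r ∈ range q, (if (v + (r:ℝ)/q < 1/q ∨ 1 - 1/q < v + (r:ℝ)/q) then (1:ℝ) else 0) ≤ 2 := by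
  have hq0 : (0:ℝ) < (q:ℝ) := by exact_mod_cast hq
  calc ∑ r ∈ range q, (if (v + (r:ℝ)/q < 1/q ∨ 1 - 1/q < v + (r:ℝ)/q) then (1:ℝ) else 0)
      ≤ ∑ r ∈ range q, ((if r = 0 then (1:ℝ) else 0) + (if r = q - 1 then (1:ℝ) else 0)) := by
        refine Finset.sum_le_sum fun r hr => ?_
        simp only [mem_range] at hr
        split
        · rename_i hcnd
          rcases hcnd with hc | hc
          · have hr0 : r = 0 := by
              by_contra hrne
              have hr1 : (1:ℝ) ≤ (r:ℝ) := by exact_mod_cast Nat.one_le_iff_ne_zero.mpr hrne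
              have : (1:ℝ)/q ≤ (r:ℝ)/q := (div_le_div_iff_of_pos_right hq0).mpr hr1
              linarith
            subst hr0
            split_ifs <;> (try omega) <;> norm_num
          · have hrq : r = q - 1 := by
              by_contra hrne
              have hr2 : (r:ℝ) ≤ (q:ℝ) - 2 := by
                have : (r:ℤ) ≤ (q:ℤ) - 2 := by omega
                exact_mod_cast this
              have h4 : (r:ℝ)/q ≤ ((q:ℝ)-2)/q := (div_le_div_iff_of_pos_right hq0).mpr hr2
              have h9 : v + (r:ℝ)/q < 1/q + ((q:ℝ)-2)/q := by linarith
              rw [← add_div] at h9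
              have h10 : (1 + ((q:ℝ)-2))/q = 1 - 1/q := by field_simp; ring
              rw [h10] at h9
              linarith
            subst hrq
            split_ifs <;> (try omega) <;> norm_num
        · positivity
    _ ≤ 2 := by
        rw [Finset.sum_add_distrib, Finset.sum_ite_eq' (range q) 0 (fun _ => (1:ℝ)),
          Finset.sum_ite_eq' (range q) (q-1) (fun _ => (1:ℝ))]
        have h0 : (0:ℕ) ∈ range q := by simp [hq]
        have h1 : q - 1 ∈ range q := by simp; omega
        rw [if_pos h0, if_pos h1]
        norm_num

lemma block_bound (γ : ℝ) (p : ℤ) (q : ℕ) (hq : 0 < q) (u : ℤ)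
    (hu : p * u ≡ 1 [ZMOD (q:ℤ)]) (happ : |γ - p / q| < 1 / q^2) (y : ℝ) :
    |∑ j ∈ range q, (Int.fract (y + (j : ℝ) * γ) - 1/2)| ≤ 3 := by
  have hq0 : (0:ℝ) < (q:ℝ) := by exact_mod_cast hq
  have hq1 : (1:ℝ) ≤ (q:ℝ) := by exact_mod_cast hq
  have hqinv : 1/(q:ℝ) ≤ 1 := by rw [div_le_one hq0]; exact hq1
  set δ : ℝ := γ - p / q with hδ
  have hδq : |δ| < 1 / q^2 := happ
  set A : ℕ → ℝ := fun j => y + (((j : ℤ) * p : ℤ) : ℝ) / q with hA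
  set e : ℕ → ℤ := fun j => ⌊A j + (j:ℝ) * δ⌋ - ⌊A j⌋ with he
  set v : ℝ := Int.fract ((q:ℝ) * y) / q with hv
  have hv0 : 0 ≤ v := by
    rw [hv]; exact div_nonneg (Int.fract_nonneg _) hq0.le
  have hv1 : v < 1 / q := by
    rw [hv, div_lt_div_iff₀ hq0 hq0]
    nlinarith [Int.fract_lt_one ((q:ℝ) * y)]
  -- pointwise small perturbation
  have hjd : ∀ j ∈ range q, |(j:ℝ) * δ| < 1 / q := by
    intro j hj
    simp only [mem_range] at hj
    have hj' : (j:ℝ) ≤ (q:ℝ) - 1 := by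
      have h' : (j:ℤ) ≤ (q:ℤ) - 1 := by omega
      exact_mod_cast h'
    rw [abs_mul, Nat.abs_cast]
    have hj0 : (0:ℝ) ≤ (j:ℝ) := Nat.cast_nonneg j
    have habs0 : 0 ≤ |δ| := abs_nonneg δ
    have : (j:ℝ) * |δ| ≤ ((q:ℝ) - 1) * |δ| := by nlinarith
    have h2a : ((q:ℝ)-1) * |δ| ≤ ((q:ℝ)-1) * (1/q^2) :=
      mul_le_mul_of_nonneg_left hδq.le (by linarith)
    have h2b : ((q:ℝ)-1) * (1/q^2) < 1/q := by
      rw [mul_one_div, div_lt_div_iff₀ (by positivity) hq0]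
      nlinarith
    linarith
  -- decomposition of each term
  have hterm : ∀ j ∈ range q,
      Int.fract (y + (j:ℝ) * γ) = Int.fract (A j) + (j:ℝ) * δ - (e j : ℝ) := by
    intro j hj
    have h1 : y + (j:ℝ) * γ = A j + (j:ℝ) * δ := by
      rw [hA, hδ]; push_cast; field_simp; ring
    have h2 := Int.floor_add_fract (A j + (j:ℝ)*δ)
    have h3 := Int.floor_add_fract (A j)
    rw [h1]
    simp only [he]
    push_cast
    linarith
  -- split the sum
  have hsplit : ∑ j ∈ range q, (Int.fract (y + (j:ℝ) * γ) - 1/2)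
      = (∑ j ∈ range q, (Int.fract (A j) - 1/2))
        + (∑ j ∈ range q, (j:ℝ) * δ) - (∑ j ∈ range q, (e j : ℝ)) := by
    rw [← Finset.sum_add_distrib, ← Finset.sum_sub_distrib]
    refine Finset.sum_congr rfl fun j hj => ?_
    rw [hterm j hj]; ring
  -- first sum via reindexing
  have hS1 : ∑ j ∈ range q, (Int.fract (A j) - 1/2)
      = Int.fract ((q:ℝ)*y) - 1/2 := by
    have hri := sum_fract_reindex q hq p u hu y (fun t => t - 1/2)
    simp only [hA]
    rw [hri]
    have e1 : ∑ r ∈ range q, ((r:ℝ)/q) = ((q:ℝ)*((q:ℝ)-1)/2)/q := by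
      rw [← Finset.sum_div, sum_range_cast]
    rw [Finset.sum_sub_distrib, Finset.sum_add_distrib, e1, Finset.sum_const, card_range,
      Finset.sum_const, card_range, nsmul_eq_mul, nsmul_eq_mul]
    field_simp
    ring
  have hS1b : |∑ j ∈ range q, (Int.fract (A j) - 1/2)| ≤ 1/2 := by
    rw [hS1, abs_le]
    have := Int.fract_nonneg ((q:ℝ)*y)
    have := Int.fract_lt_one ((q:ℝ)*y)
    constructor <;> linarith
  -- second sum
  have hS2 : |∑ j ∈ range q, (j:ℝ) * δ| ≤ 1/2 := by
    rw [← Finset.sum_mul, sum_range_cast, abs_mul]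
    have h1 : |(q:ℝ) * ((q:ℝ) - 1) / 2| ≤ (q:ℝ)^2/2 := by
      rw [abs_of_nonneg (by nlinarith)]; nlinarith
    calc |(q:ℝ)*((q:ℝ)-1)/2| * |δ| ≤ ((q:ℝ)^2/2) * (1/q^2) :=
          mul_le_mul h1 (le_of_lt hδq) (abs_nonneg _) (by positivity)
      _ = 1/2 := by field_simp
  -- third sum
  have hS3 : |∑ j ∈ range q, (e j : ℝ)| ≤ 2 := by
    have hg : ∀ j ∈ range q, |(e j : ℝ)| ≤
        (fun t => if (t < 1/(q:ℝ) ∨ 1 - 1/(q:ℝ) < t) then (1:ℝ) else 0) (Int.fract (A j)) := by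
      intro j hj
      obtain ⟨hb1, hb2⟩ := floor_perturb (A j) ((j:ℝ)*δ) (1/q) (hjd j hj) hqinv
      have hb1' : |e j| ≤ 1 := by simp only [he]; exact hb1
      simp only []
      by_cases h0 : e j = 0
      · rw [h0]
        simp only [Int.cast_zero, abs_zero]
        split <;> norm_num
      · have h0' : ⌊A j + (j:ℝ)*δ⌋ - ⌊A j⌋ ≠ 0 := by simpa only [he] using h0
        rw [if_pos (hb2 h0')]
        exact_mod_cast hb1'
    calc |∑ j ∈ range q, (e j : ℝ)| ≤ ∑ j ∈ range q, |(e j : ℝ)| :=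
          Finset.abs_sum_le_sum_abs _ _
      _ ≤ ∑ j ∈ range q, (fun t => if (t < 1/(q:ℝ) ∨ 1 - 1/(q:ℝ) < t) then (1:ℝ) else 0) (Int.fract (A j)) :=
          Finset.sum_le_sum hg
      _ = ∑ r ∈ range q, (fun t => if (t < 1/(q:ℝ) ∨ 1 - 1/(q:ℝ) < t) then (1:ℝ) else 0)
            (Int.fract ((q:ℝ)*y)/q + (r:ℝ)/q) := by
          simp only [hA]
          exact sum_fract_reindex q hq p u hu y (fun t => if (t < 1/(q:ℝ) ∨ 1 - 1/(q:ℝ) < t) then (1:ℝ) else 0)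
      _ ≤ 2 := by
          simp only []
          exact indicator_sum q hq v hv0 hv1
  -- conclude
  rw [hsplit]
  have habs : |(∑ j ∈ range q, (Int.fract (A j) - 1/2)) + (∑ j ∈ range q, (j:ℝ)*δ)
      - (∑ j ∈ range q, (e j : ℝ))|
      ≤ |∑ j ∈ range q, (Int.fract (A j) - 1/2)| + |∑ j ∈ range q, (j:ℝ)*δ|
        + |∑ j ∈ range q, (e j : ℝ)| := by
    calc |(∑ j ∈ range q, (Int.fract (A j) - 1/2)) + (∑ j ∈ range q, (j:ℝ)*δ)
        - (∑ j ∈ range q, (e j : ℝ))|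
        ≤ |(∑ j ∈ range q, (Int.fract (A j) - 1/2)) + (∑ j ∈ range q, (j:ℝ)*δ)|
          + |∑ j ∈ range q, (e j : ℝ)| := abs_sub _ _
      _ ≤ _ := by gcongr; exact abs_add_le _ _
  linarith [hS1b, hS2, hS3, habs]

/-- existence of good approximations with arbitrarily large denominator -/
lemma exists_good_approx (γ : ℝ) (hirr : Irrational γ) (Q₀ : ℕ) :
    ∃ (p : ℤ) (q : ℕ), Q₀ ≤ q ∧ 0 < q ∧ (∃ u : ℤ, p * u ≡ 1 [ZMOD (q:ℤ)]) ∧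
      |γ - p / q| < 1 / q^2 := by
  have hinf := Real.infinite_rat_abs_sub_lt_one_div_den_sq_of_irrational hirr
  set S : Set ℚ := {ξ : ℚ | |γ - (ξ:ℝ)| < 1 / (ξ.den : ℝ)^2} with hS
  -- find an element of S with large denominator
  have hex : ∃ ξ ∈ S, Q₀ ≤ ξ.den := by
    by_contra hcon
    push_neg at hcon
    apply hinf
    set M : ℤ := ⌈|γ| + 1⌉ with hM
    have hsub : S ⊆ (fun pq : ℤ × ℕ => (pq.1 : ℚ) / (pq.2 : ℚ)) ''
        ((Set.Icc (-M * Q₀) (M * Q₀)) ×ˢ (Set.Icc 0 Q₀)) := by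
      intro ξ hξ
      have hden := hcon ξ hξ
      refine ⟨(ξ.num, ξ.den), ?_, ?_⟩
      · constructor
        · simp only [Set.mem_Icc]
          have h1 : |γ - (ξ:ℝ)| < 1 := by
            refine lt_of_lt_of_le hξ ?_
            rw [div_le_one (by positivity)]
            have : (1:ℝ) ≤ (ξ.den:ℝ) := by exact_mod_cast ξ.pos
            nlinarith
          have h2 : |(ξ:ℝ)| ≤ |γ| + 1 := by
            have := abs_sub_abs_le_abs_sub (ξ:ℝ) γ
            rw [abs_sub_comm] at h1
            linarith
          have h3 : |(ξ.num:ℝ)| ≤ (|γ| + 1) * ξ.den := by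
            have hc : (ξ:ℝ) = (ξ.num:ℝ) / (ξ.den:ℝ) := by
              rw [Rat.cast_def]
            have hd : (0:ℝ) < (ξ.den:ℝ) := by exact_mod_cast ξ.pos
            rw [hc, abs_div, abs_of_pos hd, div_le_iff₀ hd] at h2
            linarith
          have h4 : ((ξ.den:ℝ)) ≤ (Q₀:ℝ) := by
            exact_mod_cast le_of_lt hden
          have h5 : (|γ|+1) ≤ (M:ℝ) := by
            rw [hM]; exact Int.le_ceil _
          have hM0 : (0:ℝ) ≤ (M:ℝ) := le_trans (by positivity) h5
          have h6 : |(ξ.num:ℝ)| ≤ (M:ℝ) * Q₀ := by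
            calc |(ξ.num:ℝ)| ≤ (|γ|+1) * ξ.den := h3
              _ ≤ (M:ℝ) * Q₀ := by
                  have hd0 : (0:ℝ) ≤ (ξ.den:ℝ) := by positivity
                  nlinarith
          have h7 : |ξ.num| ≤ M * Q₀ := by exact_mod_cast h6
          constructor
          · linarith [abs_le.mp h7 |>.1]
          · exact abs_le.mp h7 |>.2
        · simp only [Set.mem_Icc]
          exact ⟨Nat.zero_le _, le_of_lt hden⟩
      · simp only
        exact_mod_cast (Rat.num_div_den ξ)
    exact Set.Finite.subset (Set.Finite.image _ (Set.Finite.prod (Set.finite_Icc _ _)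
      (Set.finite_Icc _ _))) hsub
  obtain ⟨ξ, hξS, hξden⟩ := hex
  refine ⟨ξ.num, ξ.den, hξden, ξ.pos, ?_, ?_⟩
  · -- modular inverse from coprimality
    have hcop : IsCoprime (ξ.num) (ξ.den : ℤ) := by
      rw [Int.isCoprime_iff_gcd_eq_one]
      exact ξ.reduced
    obtain ⟨a, b, hab⟩ := hcop
    refine ⟨a, ?_⟩
    rw [Int.ModEq]
    have : (ξ.num * a) % (ξ.den:ℤ) = (ξ.num * a + b * ξ.den) % (ξ.den:ℤ) := by
      rw [Int.add_mul_emod_self_right]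
    rw [this]
    congr 1
    linarith [hab]
  · have : ((ξ:ℝ)) = (ξ.num:ℝ) / (ξ.den:ℝ) := by rw [Rat.cast_def]
    rw [← this]
    exact hξS

/-- the key equidistribution bound -/
lemma frac_sum_bound (γ : ℝ) (hirr : Irrational γ) (ε : ℝ) (hε : 0 < ε) :
    ∃ C : ℝ, 0 < C ∧ ∀ (x : ℝ) (K : ℕ),
      |∑ k ∈ range K, (Int.fract (x + (k:ℝ) * γ) - 1/2)| ≤ ε * K + C := by
  obtain ⟨p, q, hQ₀, hq, ⟨u, hu⟩, happ⟩ := exists_good_approx γ hirr (⌈3/ε⌉₊ + 1)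
  have hq0 : (0:ℝ) < (q:ℝ) := by exact_mod_cast hq
  have hqε : 3 / (q:ℝ) ≤ ε := by
    rw [div_le_iff₀ hq0]
    have h1 : (3:ℝ)/ε ≤ (⌈3/ε⌉₊ : ℝ) := Nat.le_ceil _
    have h2 : ((⌈3/ε⌉₊ : ℕ) : ℝ) + 1 ≤ (q:ℝ) := by exact_mod_cast hQ₀
    have h3 : ε * (3/ε) = 3 := by field_simp
    nlinarith [mul_le_mul_of_nonneg_left h1 hε.le,
      mul_le_mul_of_nonneg_left (show ((⌈3/ε⌉₊:ℕ):ℝ) ≤ (q:ℝ) by linarith) hε.le]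
  refine ⟨q, hq0, fun x K => ?_⟩
  have hblock : ∀ y : ℝ, |∑ j ∈ range q, (Int.fract (y + (j : ℝ) * γ) - 1/2)| ≤ 3 :=
    block_bound γ p q hq u hu happ
  set f : ℕ → ℝ := fun k => Int.fract (x + (k:ℝ) * γ) - 1/2 with hf
  have hfull : ∀ a : ℕ, |∑ k ∈ range (a*q), f k| ≤ 3 * a := by
    intro a
    induction a with
    | zero => simp
    | succ n ih =>
      have hsucc : (n+1)*q = n*q + q := by ring
      rw [hsucc, Finset.sum_range_add]
      have hinner : ∑ j ∈ range q, f (n*q + j)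
          = ∑ j ∈ range q, (Int.fract ((x + ((n*q : ℕ):ℝ)*γ) + (j:ℝ)*γ) - 1/2) := by
        refine Finset.sum_congr rfl fun j hj => ?_
        rw [hf]
        congr 2
        push_cast
        ring
      calc |∑ k ∈ range (n*q), f k + ∑ j ∈ range q, f (n*q + j)|
          ≤ |∑ k ∈ range (n*q), f k| + |∑ j ∈ range q, f (n*q + j)| := abs_add_le _ _
        _ ≤ 3*n + 3 := by
            rw [hinner]
            exact add_le_add ih (hblock _)
        _ = 3 * (n+1 : ℕ) := by push_cast; ring
  -- decompose K
  have hdm : (K / q) * q + K % q = K := by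
    rw [mul_comm]; exact Nat.div_add_mod K q
  have hsum : ∑ k ∈ range K, f k = ∑ k ∈ range ((K/q)*q), f k
      + ∑ j ∈ range (K % q), f ((K/q)*q + j) := by
    rw [← Finset.sum_range_add, hdm]
  have hrem : |∑ j ∈ range (K % q), f ((K/q)*q + j)| ≤ (q:ℝ) := by
    calc |∑ j ∈ range (K % q), f ((K/q)*q + j)|
        ≤ ∑ j ∈ range (K % q), |f ((K/q)*q + j)| := Finset.abs_sum_le_sum_abs _ _
      _ ≤ ∑ _j ∈ range (K % q), (1:ℝ) := by
          refine Finset.sum_le_sum fun j hj => ?_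
          rw [hf]
          have h1 := Int.fract_nonneg (x + (((K/q)*q + j : ℕ):ℝ)*γ)
          have h2 := Int.fract_lt_one (x + (((K/q)*q + j : ℕ):ℝ)*γ)
          rw [abs_le]
          constructor <;> simp only [] <;> [linarith; linarith]
      _ = (K % q : ℕ) := by simp
      _ ≤ (q:ℝ) := by
          have := Nat.mod_lt K hq
          exact_mod_cast le_of_lt this
  have hdiv : 3 * ((K/q : ℕ):ℝ) ≤ ε * K := by
    have h1 : ((K/q : ℕ):ℝ) ≤ (K:ℝ)/(q:ℝ) := Nat.cast_div_le
    calc 3 * ((K/q : ℕ):ℝ) ≤ 3 * ((K:ℝ)/(q:ℝ)) := by linarith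
      _ = (3/(q:ℝ)) * K := by ring
      _ ≤ ε * K := by
          have hK0 : (0:ℝ) ≤ (K:ℝ) := Nat.cast_nonneg K
          nlinarith
  calc |∑ k ∈ range K, f k| ≤ |∑ k ∈ range ((K/q)*q), f k|
        + |∑ j ∈ range (K % q), f ((K/q)*q + j)| := by rw [hsum]; exact abs_add_le _ _
    _ ≤ 3 * ((K/q : ℕ):ℝ) + (q:ℝ) := add_le_add (hfull (K/q)) hrem
    _ ≤ ε * K + q := by linarith

lemma N_formula (β α : ℝ) (hβ : 0 < β) :
    (N β α : ℝ) = ((⌊(α*Real.sqrt β - 1)/β⌋.toNat : ℕ):ℝ) * (α*Real.sqrt β)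
      - β * (((⌊(α*Real.sqrt β - 1)/β⌋.toNat : ℕ):ℝ) * (((⌊(α*Real.sqrt β - 1)/β⌋.toNat : ℕ):ℝ) + 1) / 2)
      - ∑ j ∈ range (⌊(α*Real.sqrt β - 1)/β⌋.toNat),
          Int.fract ((α*Real.sqrt β - β) + (j:ℝ) * (-β)) := by
  set S : ℝ := α * Real.sqrt β with hS
  set Kz : ℤ := ⌊(S - 1)/β⌋ with hKz
  set Kn : ℕ := Kz.toNat with hKn
  set T : Finset (ℤ × ℤ) := (Finset.Icc 1 Kz).biUnion
    (fun k => {k} ×ˢ Finset.Icc 1 ⌊S - (k:ℝ)*β⌋) with hT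
  -- the set equals the finset
  have hfloor_ge : ∀ k : ℤ, k ∈ Finset.Icc 1 Kz → (1:ℤ) ≤ ⌊S - (k:ℝ)*β⌋ := by
    intro k hk
    simp only [Finset.mem_Icc] at hk
    rw [Int.le_floor]
    have h1 : ((k:ℝ)) ≤ (S-1)/β := by
      calc ((k:ℝ)) ≤ (Kz:ℝ) := by exact_mod_cast hk.2
        _ ≤ (S-1)/β := Int.floor_le _
    have h2 : (k:ℝ) * β ≤ S - 1 := by
      rw [← le_div_iff₀ hβ]; exact h1
    push_cast
    linarith
  have hset : {p : ℤ × ℤ | 0 < p.1 ∧ 0 < p.2 ∧ (p.2 : ℝ) ≤ S - (p.1 : ℝ) * β} = ↑T := by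
    ext ⟨k, m⟩
    simp only [Set.mem_setOf_eq, hT, Finset.coe_biUnion, Set.mem_iUnion,
      Finset.mem_coe, Finset.mem_Icc, Finset.mem_product, Finset.mem_singleton]
    constructor
    · rintro ⟨hk, hm, hle⟩
      refine ⟨k, ⟨hk, ?_⟩, rfl, ?_, ?_⟩
      · rw [hKz, Int.le_floor]
        rw [le_div_iff₀ hβ]
        have hm1 : (1:ℝ) ≤ (m:ℝ) := by exact_mod_cast hm
        linarith
      · exact hm
      · rw [Int.le_floor]; exact hle
    · rintro ⟨k', ⟨hk1, hk2⟩, hkeq, hm1, hm2⟩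
      subst hkeq
      refine ⟨hk1, hm1, ?_⟩
      calc ((m:ℝ)) ≤ (⌊S - ((k:ℤ):ℝ)*β⌋ : ℝ) := by exact_mod_cast hm2
        _ ≤ S - ((k:ℤ):ℝ)*β := Int.floor_le _
  -- N = card T
  have hN : N β α = T.card := by
    rw [N, ← hS]
    rw [hset, Set.ncard_coe_finset]
  -- card T as a sum
  have hdisj : ∀ k₁ ∈ Finset.Icc 1 Kz, ∀ k₂ ∈ Finset.Icc 1 Kz, k₁ ≠ k₂ →
      Disjoint ({k₁} ×ˢ Finset.Icc 1 ⌊S - (k₁:ℝ)*β⌋) ({k₂} ×ˢ Finset.Icc 1 ⌊S - (k₂:ℝ)*β⌋) := by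
    intro k₁ _ k₂ _ hne
    rw [Finset.disjoint_left]
    rintro ⟨a, b⟩ hab1 hab2
    simp only [Finset.mem_product, Finset.mem_singleton] at hab1 hab2
    exact hne (hab1.1 ▸ hab2.1 ▸ rfl)
  have hcard : T.card = ∑ k ∈ Finset.Icc 1 Kz, (⌊S - (k:ℝ)*β⌋).toNat := by
    rw [hT, Finset.card_biUnion hdisj]
    refine Finset.sum_congr rfl fun k hk => ?_
    rw [Finset.card_product, Finset.card_singleton, one_mul, Int.card_Icc]
    congr 1
    omega
  -- reindex Icc 1 Kz to range Kn
  have hmap : Finset.Icc (1:ℤ) Kz = (Finset.range Kn).map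
      ⟨fun j : ℕ => (j:ℤ) + 1, fun a b hab => by simpa using hab⟩ := by
    ext k
    simp only [Finset.mem_Icc, Finset.mem_map, Finset.mem_range, Function.Embedding.coeFn_mk, DFunLike.coe]
    constructor
    · intro ⟨h1, h2⟩
      refine ⟨(k-1).toNat, by rw [hKn]; omega, by omega⟩
    · rintro ⟨j, hj, rfl⟩
      rw [hKn] at hj
      omega
  -- cast the sum to ℝ
  have hcast : (N β α : ℝ) = ∑ j ∈ range Kn, ((⌊S - (((j:ℤ)+1):ℝ)*β⌋ : ℤ) : ℝ) := by
    rw [hN, hcard, hmap, Finset.sum_map]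
    push_cast
    refine Finset.sum_congr rfl fun j hj => ?_
    simp only [Function.Embedding.coeFn_mk, DFunLike.coe]
    have hmem : ((j:ℤ)+1) ∈ Finset.Icc 1 Kz := by
      rw [hmap]
      simp only [Finset.mem_map, Finset.mem_range, Function.Embedding.coeFn_mk]
      exact ⟨j, by simpa using hj, rfl⟩
    have harg : ((((j:ℤ)+1) : ℤ):ℝ) = (j:ℝ)+1 := by push_cast; ring
    have hpos : (0:ℤ) ≤ ⌊S - ((j:ℝ)+1)*β⌋ := by
      have h1 := hfloor_ge _ hmem
      rw [harg] at h1
      omega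
    rw [harg]
    exact_mod_cast Int.toNat_of_nonneg hpos
  -- floor = value - fract
  have hfr : ∀ j : ℕ, ((⌊S - (((j:ℤ)+1):ℝ)*β⌋ : ℤ) : ℝ)
      = (S - ((j:ℝ)+1)*β) - Int.fract ((S - β) + (j:ℝ)*(-β)) := by
    intro j
    have h1 : S - (((j:ℤ)+1):ℝ)*β = (S - β) + (j:ℝ)*(-β) := by push_cast; ring
    rw [h1, Int.fract]
    push_cast
    ring_nf
  rw [hcast]
  have : ∑ j ∈ range Kn, ((⌊S - (((j:ℤ)+1):ℝ)*β⌋ : ℤ) : ℝ)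
      = ∑ j ∈ range Kn, ((S - ((j:ℝ)+1)*β) - Int.fract ((S - β) + (j:ℝ)*(-β))) :=
    Finset.sum_congr rfl fun j _ => hfr j
  rw [this, Finset.sum_sub_distrib]
  have hlin : ∑ j ∈ range Kn, (S - ((j:ℝ)+1)*β)
      = (Kn:ℝ) * S - β * ((Kn:ℝ) * ((Kn:ℝ)+1)/2) := by
    have h1 : ∑ j ∈ range Kn, (S - ((j:ℝ)+1)*β)
        = (Kn:ℝ)*S - (∑ j ∈ range Kn, ((j:ℝ)+1))*β := by
      rw [Finset.sum_sub_distrib, Finset.sum_const, card_range, nsmul_eq_mul, ← Finset.sum_mul]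
    rw [h1, Finset.sum_add_distrib, Finset.sum_const, card_range, nsmul_eq_mul, mul_one,
      sum_range_cast]
    ring
  rw [hlin]

theorem stmt_4 (β : ℝ) (hβ : 0 < β) (hirr : Irrational β) :
    Filter.Tendsto (fun α : ℝ => ((N β α : ℝ) - α ^ 2 / 2) / α) Filter.atTop
      (nhds (-(Real.sqrt β + Real.sqrt (1 / β)) / 2)) ∧
    -(Real.sqrt β + Real.sqrt (1 / β)) / 2 < -1 := by
  set t : ℝ := Real.sqrt β with ht
  have ht0 : 0 < t := Real.sqrt_pos.mpr hβ
  have ht2 : t ^ 2 = β := Real.sq_sqrt hβ.le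
  have hinv : Real.sqrt (1/β) = 1/t := by
    rw [one_div, one_div, Real.sqrt_inv, ht]
  have htne1 : t ≠ 1 := by
    intro h
    apply hirr
    refine ⟨1, ?_⟩
    rw [← ht2, h]; norm_num
  have hL : -(Real.sqrt β + Real.sqrt (1/β))/2 = -((t + 1/t)/2) := by
    rw [hinv, ← ht]; ring
  constructor
  · -- main limit
    rw [hL]
    rw [Metric.tendsto_atTop]
    intro ε hε
    obtain ⟨C, hC, hbound⟩ := frac_sum_bound (-β) hirr.neg (ε * t / 8) (by positivity)
    refine ⟨max (max 1 ((1+β+1)/t)) ((1+β+C)*2/ε), fun α hα => ?_⟩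
    have hα1 : (1:ℝ) ≤ α := le_trans (le_max_left _ _) (le_trans (le_max_left _ _) hα)
    have hα0 : 0 < α := by linarith
    have hαS : (1+β+1)/t ≤ α := le_trans (le_max_right _ _) (le_trans (le_max_left _ _) hα)
    have hαC : (1+β+C)*2/ε ≤ α := le_trans (le_max_right _ _) hα
    set S : ℝ := α * t with hSdef
    have hS2 : 1 + β + 1 ≤ S := by
      rw [hSdef]
      calc 1 + β + 1 = ((1+β+1)/t) * t := by field_simp
        _ ≤ α * t := by nlinarith
    set Kz : ℤ := ⌊(S - 1)/β⌋ with hKz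
    have hD1 : (1:ℝ) ≤ (S-1)/β := by
      rw [le_div_iff₀ hβ]; linarith
    have hKz1 : 1 ≤ Kz := by
      rw [hKz]
      exact_mod_cast Int.le_floor.mpr (by exact_mod_cast hD1)
    set Kn : ℕ := Kz.toNat with hKn
    have hKnz : ((Kn:ℤ)) = Kz := Int.toNat_of_nonneg (by omega)
    set k : ℝ := (Kn : ℝ) with hk
    have hkz : k = ((Kz:ℤ):ℝ) := by rw [hk, ← hKnz]; norm_num
    set D : ℝ := (S-1)/β with hD
    set θ : ℝ := D - k with hθ
    have hθ0 : 0 ≤ θ := by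
      rw [hθ, hkz, hKz]
      linarith [Int.floor_le D]
    have hθ1 : θ < 1 := by
      rw [hθ, hkz, hKz]
      linarith [Int.lt_floor_add_one D]
    have hkD : k = D - θ := by rw [hθ]; ring
    -- the formula for N
    have hNf := N_formula β α hβ
    rw [← ht, ← hSdef, ← hD, ← hKz, ← hKn, ← hk] at hNf
    -- equidistribution bound
    have hE := hbound (S - β) Kn
    set E : ℝ := ∑ j ∈ range Kn, (Int.fract ((S - β) + (j:ℝ) * (-β)) - 1/2) with hEdef
    have hsumE : ∑ j ∈ range Kn, Int.fract ((S - β) + (j:ℝ) * (-β)) = E + k/2 := by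
      rw [hEdef, Finset.sum_sub_distrib, Finset.sum_const, card_range, nsmul_eq_mul, hk]
      ring
    rw [hsumE] at hNf
    clear_value S Kz Kn k D θ
    -- the algebraic identity
    have hP : k * S - β * (k*(k+1)/2) - k/2 - α^2/2 + ((t + 1/t)/2)*α
        = (1 - θ + β*θ*(1-θ))/2 := by
      rw [hkD, hD, hSdef, ← ht2]
      field_simp
      ring
    have hPb : |k * S - β * (k*(k+1)/2) - k/2 - α^2/2 + ((t + 1/t)/2)*α| ≤ 1 + β := by
      rw [hP, abs_le]
      have h1m : (0:ℝ) ≤ 1 - θ := by linarith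
      have hprod : 0 ≤ θ * (1-θ) := mul_nonneg hθ0 h1m
      have hprod1 : θ * (1-θ) ≤ 1 := by nlinarith [sq_nonneg θ, sq_nonneg (1-θ)]
      have hb1 : 0 ≤ β * θ * (1-θ) := mul_nonneg (mul_nonneg hβ.le hθ0) h1m
      have hb2 : β * θ * (1-θ) ≤ β := by nlinarith
      constructor <;> linarith
    -- bound on E
    have hkα : k ≤ α / t := by
      have h1 : k ≤ D := by rw [hkD]; linarith
      have h2 : D ≤ S/β := by
        rw [hD, div_le_div_iff₀ hβ hβ]
        nlinarith
      have h3 : S/β = α/t := by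
        rw [hSdef, ← ht2]
        field_simp
      linarith
    have hEb : |E| ≤ ε * α / 8 + C := by
      refine le_trans hE ?_
      have h1 : (ε * t / 8) * (Kn:ℝ) ≤ ε * α / 8 := by
        rw [← hk]
        calc (ε * t / 8) * k ≤ (ε * t / 8) * (α / t) := by
              apply mul_le_mul_of_nonneg_left hkα (by positivity)
          _ = ε * α / 8 := by field_simp
      linarith
    -- put it together
    have hgoal : |(N β α : ℝ) - α^2/2 + ((t + 1/t)/2)*α| < ε * α := by
      have hdecomp : (N β α : ℝ) - α^2/2 + ((t + 1/t)/2)*α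
          = (k * S - β * (k*(k+1)/2) - k/2 - α^2/2 + ((t + 1/t)/2)*α) - E := by
        rw [hNf]; ring
      rw [hdecomp]
      calc |(k * S - β * (k*(k+1)/2) - k/2 - α^2/2 + ((t + 1/t)/2)*α) - E|
          ≤ |k * S - β * (k*(k+1)/2) - k/2 - α^2/2 + ((t + 1/t)/2)*α| + |E| := abs_sub _ _
        _ ≤ (1 + β) + (ε * α / 8 + C) := add_le_add hPb hEb
        _ < ε * α := by
            have h1 : (1+β+C)*2 ≤ α * ε := (div_le_iff₀ hε).mp hαC
            nlinarith
    rw [Real.dist_eq]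
    have heq : ((N β α : ℝ) - α^2/2)/α - (-((t + 1/t)/2))
        = ((N β α : ℝ) - α^2/2 + ((t + 1/t)/2)*α)/α := by
      field_simp
      ring
    rw [heq, abs_div, abs_of_pos hα0, div_lt_iff₀ hα0]
    calc |(N β α : ℝ) - α^2/2 + ((t + 1/t)/2)*α| < ε * α := hgoal
      _ = ε * α := rfl
  · -- AM-GM part
    rw [hL]
    have h1 : 0 < (t-1)^2 := by
      apply sq_pos_of_ne_zero
      intro h
      apply htne1
      linarith [sub_eq_zero.mp h]
    have h2 : t + 1/t > 2 := by
      rw [gt_iff_lt, ← sub_pos]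
      have : t + 1/t - 2 = (t-1)^2 / t := by field_simp; ring
      rw [this]
      positivity
    linarith
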